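/- The image of Π_d is contained in S if and only if the vectors V_1, …, V_k satisfy the functional equation V_i = X_i + Σ_{j=1}^k φ_i(V_j) Z_j for every i = 1, …, k. -/
import Mathlib


/-- The image of Π_d = Π − Σ_i V_i ∧ Z_i is contained in S iff the
vectors V_1,…,V_k satisfy the functional equation V_i = X_i + Σ_j φ_i(V_j) Z_j. -/
theorem stmt_11
    (V : Type*) [AddCommGroup V] [Module ℝ V] [FiniteDimensional ℝ V]
    (k : ℕ)
    (Pi : Module.Dual ℝ V →ₗ[ℝ] V)
    (hskew : ∀ α β : Module.Dual ℝ V, α (Pi β) = - β (Pi α))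
    (S Z : Submodule ℝ V) (hcompl : IsCompl S Z)
    (P : V →ₗ[ℝ] V)
    (hPmem : ∀ v : V, P v ∈ S)
    (hPid : ∀ v ∈ S, P v = v)
    (hPZ : ∀ v ∈ Z, P v = 0)
    (Zv : Fin k → V)
    (hZind : LinearIndependent ℝ Zv)
    (hZspan : Submodule.span ℝ (Set.range Zv) = Z)
    (φ : Fin k → Module.Dual ℝ V)
    (hφS : ∀ i, ∀ v ∈ S, φ i v = 0)
    (hφZ : ∀ i j, φ i (Zv j) = if i = j then (1 : ℝ) else 0)
    (X : Fin k → V) (hX : ∀ i, X i = Pi (φ i))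
    (Vv : Fin k → V)
    (Pid : Module.Dual ℝ V →ₗ[ℝ] V)
    (hPidDef : ∀ α : Module.Dual ℝ V,
      Pid α = Pi α - ∑ i, (α (Zv i) • Vv i - α (Vv i) • Zv i)) :
    (∀ α : Module.Dual ℝ V, Pid α ∈ S) ↔
      (∀ i, Vv i = X i + ∑ j, (φ i (Vv j)) • Zv j) := by
  -- Π_d is skew-symmetric
  have hdskew : ∀ α β : Module.Dual ℝ V, α (Pid β) = - β (Pid α) := by
    intro α β
    rw [hPidDef, hPidDef]
    simp only [map_sub, map_sum, map_smul, smul_eq_mul]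
    rw [hskew α β]
    have e1 : ∀ j : Fin k, β (Zv j) * α (Vv j) - β (Vv j) * α (Zv j)
        = -(α (Zv j) * β (Vv j) - α (Vv j) * β (Zv j)) := by
      intro j; ring
    rw [Finset.sum_congr rfl (fun j _ => e1 j), Finset.sum_neg_distrib]
    ring
  -- membership in S from vanishing of all φ i
  have hmemS : ∀ v : V, (∀ i, φ i v = 0) → v ∈ S := by
    intro v hv
    have hvtop : v ∈ S ⊔ Z := by
      rw [hcompl.sup_eq_top]; trivial
    obtain ⟨s, hs, z, hz, hsz⟩ := Submodule.mem_sup.mp hvtop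
    rw [← hZspan] at hz
    obtain ⟨c, hc⟩ := (Submodule.mem_span_range_iff_exists_fun ℝ).mp hz
    have hci : ∀ i, c i = 0 := by
      intro i
      have : φ i v = c i := by
        rw [← hsz, map_add, hφS i s hs, ← hc, map_sum]
        simp [hφZ, Finset.sum_ite_eq']
      rw [hv i] at this
      exact this.symm
    have hz0 : z = 0 := by
      rw [← hc]
      simp [hci]
    rw [← hsz, hz0, add_zero]; exact hs
  -- the key computation: Pid (φ i)
  have hPidφ : ∀ i, Pid (φ i) = X i - Vv i + ∑ j, (φ i (Vv j)) • Zv j := by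
    intro i
    rw [hPidDef, hX, Finset.sum_sub_distrib]
    have : ∑ j, (φ i) (Zv j) • Vv j = Vv i := by
      simp [hφZ, ite_smul, Finset.sum_ite_eq']
    rw [this]
    abel
  constructor
  · intro h i
    have h0 : Pid (φ i) = 0 := by
      rw [← Module.forall_dual_apply_eq_zero_iff ℝ]
      intro β
      rw [hdskew β (φ i), hφS i _ (h β), neg_zero]
    have := hPidφ i
    rw [h0] at this
    have : Vv i = X i + ∑ j, (φ i (Vv j)) • Zv j := by
      have := this.symm
      linear_combination (norm := module) -this
    exact this
  · intro h α
    apply hmemS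
    intro i
    rw [hdskew (φ i) α]
    have : Pid (φ i) = 0 := by
      rw [hPidφ i, h i]
      abel
    rw [this, map_zero, neg_zero]
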